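/- Model the R-variant greedy parser on distinct scores s_1,…,s_n: it recursively splits each span [i,j] with j > i at k = argmax of s over [i,j], producing children ([i,i],[i+1,j]) if k = i, ([i,j−1],[j,j]) if k = j, and ([i,k−1],[k,j]) otherwise. Then in any tree produced by this parser, whenever a middle split of [i,j] at position k (i < k < j) occurs, the span [k,k] is a constituent and [k+1,j] is a constituent (when k < j). -/
import Mathlib


inductive Constituent (s : ℕ → ℝ) (n : ℕ) : ℕ → ℕ → Prop
  | root : Constituent s n 1 n
  | leftChild (i j k : ℕ) :
      Constituent s n i j → i < j → k ∈ Finset.Icc i j →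
      (∀ l ∈ Finset.Icc i j, l ≠ k → s l < s k) →
      Constituent s n i (if k = i then i else if k = j then j - 1 else k - 1)
  | rightChild (i j k : ℕ) :
      Constituent s n i j → i < j → k ∈ Finset.Icc i j →
      (∀ l ∈ Finset.Icc i j, l ≠ k → s l < s k) →
      Constituent s n (if k = i then i + 1 else if k = j then j else k) j

theorem stmt_15 (s : ℕ → ℝ) (n : ℕ) (i j k : ℕ)
    (hc : Constituent s n i j) (hik : i < k) (hkj : k < j)
    (hmax : ∀ l ∈ Finset.Icc i j, l ≠ k → s l < s k) :
    Constituent s n k k ∧ Constituent s n (k + 1) j := by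
  have hki : k ≠ i := hik.ne'
  have hkjne : k ≠ j := hkj.ne
  have hmem : k ∈ Finset.Icc i j := Finset.mem_Icc.mpr ⟨hik.le, hkj.le⟩
  have hkj' : Constituent s n k j := by
    have := Constituent.rightChild i j k hc (hik.trans hkj) hmem hmax
    simpa [hki, hkjne] using this
  have hmem2 : k ∈ Finset.Icc k j := Finset.mem_Icc.mpr ⟨le_refl k, hkj.le⟩
  have hmax2 : ∀ l ∈ Finset.Icc k j, l ≠ k → s l < s k := by
    intro l hl hne
    exact hmax l (Finset.mem_Icc.mpr ⟨hik.le.trans (Finset.mem_Icc.mp hl).1,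
      (Finset.mem_Icc.mp hl).2⟩) hne
  constructor
  · have := Constituent.leftChild k j k hkj' hkj hmem2 hmax2
    simpa using this
  · have := Constituent.rightChild k j k hkj' hkj hmem2 hmax2
    simpa using this
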